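/- (Lemma 2, algebraic form.) Let β > 0. If −(n/(n−1)) β (‖X‖²‖Y‖² − ⟨X,Y⟩²) < R(X,Y,X,Y) ≤ −β(‖X‖²‖Y‖² − ⟨X,Y⟩²) for all linearly independent X,Y ∈ E, then Q̊(φ) < 0 for every nonzero traceless symmetric bilinear form φ on E. If instead −(n/(n−1)) β (‖X‖²‖Y‖² − ⟨X,Y⟩²) ≤ R(X,Y,X,Y) ≤ −β(‖X‖²‖Y‖² − ⟨X,Y⟩²) for all X,Y ∈ E, then Q̊(φ) ≤ 0 for every traceless symmetric bilinear form φ on E. -/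

import Mathlib

open scoped RealInnerProductSpace



section Aux

variable {E : Type*} [NormedAddCommGroup E] [InnerProductSpace ℝ E] {n : ℕ}

/-- Basis independence of the trace of a bilinear form over orthonormal bases. -/
lemma trace_basis_eq (e f : OrthonormalBasis (Fin n) ℝ E) (B : E →ₗ[ℝ] E →ₗ[ℝ] ℝ) :
    ∑ i, B (e i) (e i) = ∑ i, B (f i) (f i) := by
  have hite := orthonormal_iff_ite.mp f.orthonormal
  calc ∑ i, B (e i) (e i)
      = ∑ i, ∑ p, ∑ q, ⟪f p, e i⟫ * (⟪f q, e i⟫ * B (f p) (f q)) := by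
        refine Finset.sum_congr rfl fun i _ => ?_
        conv_lhs => rw [← f.sum_repr' (e i)]
        simp only [map_sum, map_smul, LinearMap.sum_apply, LinearMap.smul_apply, smul_eq_mul,
          Finset.mul_sum, Finset.sum_mul]
        rw [Finset.sum_comm]
        exact Finset.sum_congr rfl fun p _ => Finset.sum_congr rfl fun q _ => by ring
    _ = ∑ p, ∑ q, (∑ i, ⟪f p, e i⟫ * ⟪e i, f q⟫) * B (f p) (f q) := by
        rw [Finset.sum_comm]
        refine Finset.sum_congr rfl fun p _ => ?_
        rw [Finset.sum_comm]
        refine Finset.sum_congr rfl fun q _ => ?_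
        rw [Finset.sum_mul]
        refine Finset.sum_congr rfl fun i _ => ?_
        rw [real_inner_comm (e i) (f q)]
        ring
    _ = ∑ p, ∑ q, (if p = q then (1:ℝ) else 0) * B (f p) (f q) := by
        refine Finset.sum_congr rfl fun p _ => Finset.sum_congr rfl fun q _ => ?_
        rw [e.sum_inner_mul_inner, hite]
    _ = ∑ i, B (f i) (f i) := by
        refine Finset.sum_congr rfl fun p _ => ?_
        simp [Finset.sum_ite_eq]

lemma sum_mul_basis_eq (e f : OrthonormalBasis (Fin n) ℝ E) (F G : E → ℝ)
    (hF : IsLinearMap ℝ F) (hG : IsLinearMap ℝ G) :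
    ∑ i, F (e i) * G (e i) = ∑ i, F (f i) * G (f i) := by
  have := trace_basis_eq e f
    (LinearMap.mk₂ ℝ (fun x y => F x * G y)
      (fun m₁ m₂ k => by simp only [hF.map_add]; ring)
      (fun c m k => by simp only [hF.map_smul, smul_eq_mul]; ring)
      (fun m k₁ k₂ => by simp only [hG.map_add]; ring)
      (fun m c k => by simp only [hG.map_smul, smul_eq_mul]; ring))
  simpa using this

end Aux


lemma rot4 {n : ℕ} (t : Fin n → Fin n → Fin n → Fin n → ℝ) :
    ∑ i, ∑ j, ∑ k, ∑ l, t i j k l = ∑ j, ∑ k, ∑ l, ∑ i, t i j k l := by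
  rw [Finset.sum_comm]
  refine Finset.sum_congr rfl fun j _ => ?_
  rw [Finset.sum_comm]
  refine Finset.sum_congr rfl fun k _ => ?_
  rw [Finset.sum_comm]

lemma core_ineq {n : ℕ} (hn : 2 ≤ n) {β : ℝ} (hβ : 0 < β)
    (A : Fin n → Fin n → ℝ) (lam : Fin n → ℝ)
    (hdiag : ∀ i, A i i = 0)
    (hlow : ∀ i k, i ≠ k → β ≤ A i k)
    (hhigh : ∀ i k, i ≠ k → A i k ≤ (n : ℝ) / ((n : ℝ) - 1) * β)
    (hsum : ∑ i, lam i = 0) :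
    ∑ i, ∑ k, A i k * lam k * lam i ≤ -(β / ((n : ℝ) - 1)) * ∑ i, lam i ^ 2 := by
  have hn2 : (2 : ℝ) ≤ (n : ℝ) := by exact_mod_cast hn
  have hn1 : (0 : ℝ) < (n : ℝ) - 1 := by linarith
  set c : ℝ := (n : ℝ) / ((n : ℝ) - 1) * β with hc
  set d : ℝ := β / ((n : ℝ) - 1) with hd
  have hd0 : 0 < d := div_pos hβ hn1
  have hdnc : d * (n : ℝ) = c := by rw [hc, hd]; ring
  have hcd : c - β = d := by
    rw [hc, hd]
    field_simp
    ring
  set g : Fin n → Fin n → ℝ := fun i k => c * (lam k * lam i) + d * (|lam k| * |lam i|) with hg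
  have term : ∀ i k, A i k * lam k * lam i ≤ g i k - (if i = k then g i k else 0) := by
    intro i k
    by_cases h : i = k
    · subst h
      rw [hdiag i]
      simp
    · simp only [h, if_false, sub_zero, hg]
      have hA1 := hlow i k h
      have hA2 := hhigh i k h
      have e3 : (A i k - c) * (lam k * lam i) ≤ d * (|lam k| * |lam i|) := by
        calc (A i k - c) * (lam k * lam i) ≤ |(A i k - c) * (lam k * lam i)| := le_abs_self _
          _ = |A i k - c| * |lam k * lam i| := abs_mul _ _
          _ ≤ d * |lam k * lam i| := by
              refine mul_le_mul_of_nonneg_right ?_ (abs_nonneg _)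
              rw [abs_le]
              exact ⟨by linarith, by linarith⟩
          _ = d * (|lam k| * |lam i|) := by rw [abs_mul]
      nlinarith [e3]
  have hrow : ∀ i, ∑ k, g i k = d * ((∑ k, |lam k|) * |lam i|) := by
    intro i
    simp only [hg]
    rw [Finset.sum_add_distrib, ← Finset.mul_sum, ← Finset.mul_sum, ← Finset.sum_mul,
      ← Finset.sum_mul, hsum]
    ring
  have hdiagsum : ∀ i : Fin n, g i i = (c + d) * lam i ^ 2 := by
    intro i
    simp only [hg]
    rw [abs_mul_abs_self]
    ring
  have h2 : (∑ i, |lam i|) ^ 2 ≤ (n : ℝ) * ∑ i, lam i ^ 2 := by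
    have := sq_sum_le_card_mul_sum_sq (s := (Finset.univ : Finset (Fin n)))
      (f := fun i => |lam i|)
    simp only [Finset.card_univ, Fintype.card_fin, sq_abs] at this
    exact_mod_cast this
  have ht : 0 ≤ ∑ i, lam i ^ 2 := Finset.sum_nonneg fun i _ => sq_nonneg _
  calc ∑ i, ∑ k, A i k * lam k * lam i
      ≤ ∑ i, ∑ k, (g i k - if i = k then g i k else 0) :=
        Finset.sum_le_sum fun i _ => Finset.sum_le_sum fun k _ => term i k
    _ = (∑ i, ∑ k, g i k) - ∑ i, g i i := by
        have hper : ∀ i : Fin n, ∑ k, (g i k - if i = k then g i k else 0)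
            = (∑ k, g i k) - g i i := by
          intro i
          rw [Finset.sum_sub_distrib]
          congr 1
          simp [Finset.sum_ite_eq]
        rw [Finset.sum_congr rfl fun i _ => hper i, Finset.sum_sub_distrib]
    _ = d * (∑ i, |lam i|) ^ 2 - (c + d) * ∑ i, lam i ^ 2 := by
        rw [Finset.sum_congr rfl fun i _ => hrow i,
          Finset.sum_congr rfl fun i _ => hdiagsum i]
        rw [← Finset.mul_sum, ← Finset.mul_sum, ← Finset.mul_sum, sq]
    _ ≤ d * ((n : ℝ) * ∑ i, lam i ^ 2) - (c + d) * ∑ i, lam i ^ 2 := by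
        have := mul_le_mul_of_nonneg_left h2 hd0.le
        linarith
    _ ≤ -(β / ((n : ℝ) - 1)) * ∑ i, lam i ^ 2 := by
        rw [← hd]
        nlinarith [hdnc]


lemma unit_orth_li {E : Type*} [NormedAddCommGroup E] [InnerProductSpace ℝ E]
    (X Y : E) (hX : ‖X‖ = 1) (hY : ‖Y‖ = 1) (hXY : ⟪X, Y⟫ = 0) :
    LinearIndependent ℝ ![X, Y] := by
  rw [linearIndependent_fin2]
  constructor
  · simp only [Matrix.cons_val_one, Matrix.head_cons, Matrix.cons_val_zero]
    intro h
    rw [h] at hY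
    simp at hY
  · intro a h
    simp only [Matrix.cons_val_one, Matrix.head_cons, Matrix.cons_val_zero] at h
    have h2 : ⟪Y, X⟫ = (0 : ℝ) := by rw [real_inner_comm]; exact hXY
    rw [← h, real_inner_smul_right, real_inner_self_eq_norm_sq, hY] at h2
    have ha : a = 0 := by simpa using h2
    rw [ha, zero_smul] at h
    rw [← h] at hX
    simp at hX



section Master

variable {E : Type*} [NormedAddCommGroup E] [InnerProductSpace ℝ E] {n : ℕ}

lemma sum_mul_basis_eq₁ (e f : OrthonormalBasis (Fin n) ℝ E) (F G : E → ℝ) (c : ℝ)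
    (hF : IsLinearMap ℝ F) (hG : IsLinearMap ℝ G) :
    ∑ i, F (e i) * G (e i) * c = ∑ i, F (f i) * G (f i) * c := by
  rw [← Finset.sum_mul, ← Finset.sum_mul, sum_mul_basis_eq e f F G hF hG]

lemma master (hn : 2 ≤ n) (e : OrthonormalBasis (Fin n) ℝ E)
    (R : E →ₗ[ℝ] E →ₗ[ℝ] E →ₗ[ℝ] E →ₗ[ℝ] ℝ)
    (hR1 : ∀ X Y Z W : E, R X Y Z W = - R Y X Z W)
    (hR2 : ∀ X Y Z W : E, R X Y Z W = - R X Y W Z)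
    {β : ℝ} (hβ : 0 < β)
    (φ : E →ₗ[ℝ] E →ₗ[ℝ] ℝ) (hsym : ∀ X Y : E, φ X Y = φ Y X)
    (htr : (∑ i, φ (e i) (e i)) = 0)
    (hb : ∀ X Y : E, ‖X‖ = 1 → ‖Y‖ = 1 → ⟪X, Y⟫ = 0 →
      -((n : ℝ) / ((n : ℝ) - 1)) * β ≤ R X Y X Y ∧ R X Y X Y ≤ -β) :
    ∃ t : ℝ, 0 ≤ t ∧ (φ ≠ 0 → 0 < t) ∧
      (∑ i, ∑ j, ∑ k, ∑ l, R (e i) (e k) (e l) (e j) * φ (e k) (e l) * φ (e i) (e j))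
        ≤ -(β / ((n : ℝ) - 1)) * t := by
  haveI hfd : FiniteDimensional ℝ E := Module.Finite.of_basis e.toBasis
  have hrank : Module.finrank ℝ E = n := by
    rw [Module.finrank_eq_card_basis e.toBasis, Fintype.card_fin]
  -- the symmetric operator associated to φ
  set T : E →ₗ[ℝ] E :=
    { toFun := fun x => (InnerProductSpace.toDual ℝ E).symm
        (LinearMap.toContinuousLinearMap (φ x)),
      map_add' := fun x y => by simp [map_add],
      map_smul' := fun c x => by simp [map_smul] } with hTdef
  have hT : ∀ x y : E, ⟪T x, y⟫ = φ x y := by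
    intro x y
    simp [hTdef, InnerProductSpace.toDual_symm_apply]
  have hTsym : T.IsSymmetric := by
    intro x y
    rw [hT, hsym, ← hT y x]
    exact real_inner_comm _ _
  set f : OrthonormalBasis (Fin n) ℝ E := hTsym.eigenvectorBasis hrank with hfdef
  set μ : Fin n → ℝ := hTsym.eigenvalues hrank with hμdef
  have hμf : ∀ i, T (f i) = μ i • f i := fun i => hTsym.apply_eigenvectorBasis hrank i
  have hite := orthonormal_iff_ite.mp f.orthonormal
  have hφf : ∀ k l, φ (f k) (f l) = if k = l then μ k else 0 := by
    intro k l
    rw [← hT, hμf, real_inner_smul_left, hite]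
    simp [mul_ite]
  -- linearity helpers
  have linP1 : ∀ y : E, IsLinearMap ℝ (fun X : E => φ X y) := by
    intro y
    refine ⟨fun a b => ?_, fun r a => ?_⟩ <;>
      simp [map_add, map_smul, LinearMap.add_apply, LinearMap.smul_apply, smul_eq_mul]
  have linP2 : ∀ x : E, IsLinearMap ℝ (fun X : E => φ x X) := by
    intro x
    refine ⟨fun a b => ?_, fun r a => ?_⟩ <;>
      simp [map_add, map_smul, smul_eq_mul]
  have linR1 : ∀ (y z w : E) (c : ℝ), IsLinearMap ℝ (fun X : E => R X y z w * c) := by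
    intro y z w c
    refine ⟨fun a b => ?_, fun r a => ?_⟩ <;>
      simp only [map_add, map_smul, LinearMap.add_apply, LinearMap.smul_apply,
        smul_eq_mul] <;> ring
  have linR2 : ∀ (x z w : E), IsLinearMap ℝ (fun X : E => R x X z w) := by
    intro x z w
    refine ⟨fun a b => ?_, fun r a => ?_⟩ <;>
      simp only [map_add, map_smul, LinearMap.add_apply, LinearMap.smul_apply, smul_eq_mul]
  have linR3 : ∀ (x y w : E), IsLinearMap ℝ (fun X : E => R x y X w) := by
    intro x y w
    refine ⟨fun a b => ?_, fun r a => ?_⟩ <;>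
      simp only [map_add, map_smul, LinearMap.add_apply, LinearMap.smul_apply, smul_eq_mul]
  have linR4 : ∀ (x y z : E) (c : ℝ), IsLinearMap ℝ (fun X : E => R x y z X * c) := by
    intro x y z c
    refine ⟨fun a b => ?_, fun r a => ?_⟩ <;>
      simp only [map_add, map_smul, LinearMap.add_apply, LinearMap.smul_apply,
        smul_eq_mul] <;> ring
  -- basis change of the quadruple sum
  have hchange :
      (∑ i, ∑ j, ∑ k, ∑ l, R (e i) (e k) (e l) (e j) * φ (e k) (e l) * φ (e i) (e j))
        = ∑ i, ∑ j, ∑ k, ∑ l,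
            R (f i) (f k) (f l) (f j) * φ (f k) (f l) * φ (f i) (f j) := by
    calc (∑ i, ∑ j, ∑ k, ∑ l, R (e i) (e k) (e l) (e j) * φ (e k) (e l) * φ (e i) (e j))
        = ∑ j, ∑ k, ∑ l, ∑ i,
            R (e i) (e k) (e l) (e j) * φ (e k) (e l) * φ (e i) (e j) := rot4 _
      _ = ∑ j, ∑ k, ∑ l, ∑ i,
            R (f i) (e k) (e l) (e j) * φ (e k) (e l) * φ (f i) (e j) := by
          refine Finset.sum_congr rfl fun j _ => Finset.sum_congr rfl fun k _ =>
            Finset.sum_congr rfl fun l _ => ?_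
          exact sum_mul_basis_eq e f (fun X => R X (e k) (e l) (e j) * φ (e k) (e l))
            (fun X => φ X (e j)) (linR1 _ _ _ _) (linP1 _)
      _ = ∑ k, ∑ l, ∑ i, ∑ j,
            R (f i) (e k) (e l) (e j) * φ (e k) (e l) * φ (f i) (e j) := rot4 _
      _ = ∑ k, ∑ l, ∑ i, ∑ j,
            R (f i) (e k) (e l) (f j) * φ (e k) (e l) * φ (f i) (f j) := by
          refine Finset.sum_congr rfl fun k _ => Finset.sum_congr rfl fun l _ =>
            Finset.sum_congr rfl fun i _ => ?_
          exact sum_mul_basis_eq e f (fun X => R (f i) (e k) (e l) X * φ (e k) (e l))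
            (fun X => φ (f i) X) (linR4 _ _ _ _) (linP2 _)
      _ = ∑ l, ∑ i, ∑ j, ∑ k,
            R (f i) (e k) (e l) (f j) * φ (e k) (e l) * φ (f i) (f j) := rot4 _
      _ = ∑ l, ∑ i, ∑ j, ∑ k,
            R (f i) (f k) (e l) (f j) * φ (f k) (e l) * φ (f i) (f j) := by
          refine Finset.sum_congr rfl fun l _ => Finset.sum_congr rfl fun i _ =>
            Finset.sum_congr rfl fun j _ => ?_
          exact sum_mul_basis_eq₁ e f (fun X => R (f i) X (e l) (f j))
            (fun X => φ X (e l)) (φ (f i) (f j)) (linR2 _ _ _) (linP1 _)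
      _ = ∑ i, ∑ j, ∑ k, ∑ l,
            R (f i) (f k) (e l) (f j) * φ (f k) (e l) * φ (f i) (f j) := rot4 _
      _ = ∑ i, ∑ j, ∑ k, ∑ l,
            R (f i) (f k) (f l) (f j) * φ (f k) (f l) * φ (f i) (f j) := by
          refine Finset.sum_congr rfl fun i _ => Finset.sum_congr rfl fun j _ =>
            Finset.sum_congr rfl fun k _ => ?_
          exact sum_mul_basis_eq₁ e f (fun X => R (f i) (f k) X (f j))
            (fun X => φ (f k) X) (φ (f i) (f j)) (linR3 _ _ _) (linP2 _)
  -- collapse the diagonal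
  have hcollapse :
      (∑ i, ∑ j, ∑ k, ∑ l, R (f i) (f k) (f l) (f j) * φ (f k) (f l) * φ (f i) (f j))
        = ∑ i, ∑ k, R (f i) (f k) (f k) (f i) * μ k * μ i := by
    refine Finset.sum_congr rfl fun i _ => ?_
    rw [Finset.sum_comm]
    refine Finset.sum_congr rfl fun k _ => ?_
    simp only [hφf, mul_ite, mul_zero, ite_mul, zero_mul]
    rw [Finset.sum_comm]
    simp [Finset.sum_ite_eq]
  -- trace of μ
  have htrf : ∑ i, μ i = 0 := by
    have h1 := trace_basis_eq e f φ
    rw [htr] at h1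
    have h2 : ∀ i : Fin n, φ (f i) (f i) = μ i := by
      intro i
      rw [hφf]
      simp
    rw [Finset.sum_congr rfl fun i _ => h2 i] at h1
    exact h1.symm
  -- the sectional curvature bounds on the eigenbasis
  have hn2 : (2 : ℝ) ≤ (n : ℝ) := by exact_mod_cast hn
  have hn1 : (0 : ℝ) < (n : ℝ) - 1 := by linarith
  set A : Fin n → Fin n → ℝ := fun i k => R (f i) (f k) (f k) (f i) with hA
  have hdiag : ∀ i, A i i = 0 := by
    intro i
    have := hR1 (f i) (f i) (f i) (f i)
    simp only [hA]
    linarith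
  have hbound : ∀ i k : Fin n, i ≠ k →
      β ≤ A i k ∧ A i k ≤ (n : ℝ) / ((n : ℝ) - 1) * β := by
    intro i k hik
    have h1 := f.orthonormal.1 i
    have h2 := f.orthonormal.1 k
    have h3 : ⟪f i, f k⟫ = 0 := f.orthonormal.2 hik
    obtain ⟨hb1, hb2⟩ := hb (f i) (f k) h1 h2 h3
    have h4 := hR2 (f i) (f k) (f k) (f i)
    simp only [hA]
    constructor <;> nlinarith [h4]
  refine ⟨∑ i, μ i ^ 2, Finset.sum_nonneg fun i _ => sq_nonneg _, ?_, ?_⟩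
  · -- positivity when φ ≠ 0
    intro hφ
    have hne : (∑ i, μ i ^ 2) ≠ 0 := by
      intro hzero
      apply hφ
      have hμ0 : ∀ i, μ i = 0 := by
        intro i
        have := (Finset.sum_eq_zero_iff_of_nonneg fun j _ => sq_nonneg (μ j)).mp hzero i
          (Finset.mem_univ i)
        exact pow_eq_zero_iff (by norm_num) |>.mp this
      have hT0 : T = 0 := by
        apply f.toBasis.ext
        intro i
        rw [OrthonormalBasis.coe_toBasis, hμf, hμ0]
        simp
      ext x y
      rw [← hT, hT0]
      simp
    rcases Finset.exists_ne_zero_of_sum_ne_zero hne with ⟨i, _, hi⟩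
    have hpos : 0 < μ i ^ 2 := lt_of_le_of_ne (sq_nonneg _) (Ne.symm hi)
    exact lt_of_lt_of_le hpos (Finset.single_le_sum (fun j _ => sq_nonneg (μ j))
      (Finset.mem_univ i))
  · -- the inequality
    rw [hchange, hcollapse]
    exact core_ineq hn hβ A μ hdiag (fun i k h => (hbound i k h).1)
      (fun i k h => (hbound i k h).2) htrf

end Master


/-- **Lemma 2, algebraic form.** Let `β > 0`.
If `−(n/(n−1)) β (‖X‖²‖Y‖² − ⟪X,Y⟫²) < R(X,Y,X,Y) ≤ −β(‖X‖²‖Y‖² − ⟪X,Y⟫²)`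
for all linearly independent `X, Y`, then `Q̊(φ) < 0` for every nonzero traceless
symmetric bilinear form `φ`; if instead the non-strict inequalities hold for all `X, Y`,
then `Q̊(φ) ≤ 0` for every traceless symmetric bilinear form `φ`. -/
theorem stmt_10
    {E : Type*} [NormedAddCommGroup E] [InnerProductSpace ℝ E]
    {n : ℕ} (hn : 2 ≤ n) (e : OrthonormalBasis (Fin n) ℝ E)
    (R : E →ₗ[ℝ] E →ₗ[ℝ] E →ₗ[ℝ] E →ₗ[ℝ] ℝ)
    (hR1 : ∀ X Y Z W : E, R X Y Z W = - R Y X Z W)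
    (hR2 : ∀ X Y Z W : E, R X Y Z W = - R X Y W Z)
    (hR3 : ∀ X Y Z W : E, R X Y Z W = R Z W X Y)
    (hR4 : ∀ X Y Z W : E, R X Y Z W + R Y Z X W + R Z X Y W = 0)
    (β : ℝ) (hβ : 0 < β) :
    ((∀ X Y : E, LinearIndependent ℝ ![X, Y] →
        -((n : ℝ) / ((n : ℝ) - 1)) * β * (‖X‖ ^ 2 * ‖Y‖ ^ 2 - ⟪X, Y⟫ ^ 2) < R X Y X Y ∧
        R X Y X Y ≤ -β * (‖X‖ ^ 2 * ‖Y‖ ^ 2 - ⟪X, Y⟫ ^ 2)) →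
      ∀ φ : E →ₗ[ℝ] E →ₗ[ℝ] ℝ, (∀ X Y : E, φ X Y = φ Y X) →
        (∑ i, φ (e i) (e i)) = 0 → φ ≠ 0 →
        (∑ i, ∑ j, ∑ k, ∑ l, R (e i) (e k) (e l) (e j) * φ (e k) (e l) * φ (e i) (e j)) < 0) ∧
    ((∀ X Y : E,
        -((n : ℝ) / ((n : ℝ) - 1)) * β * (‖X‖ ^ 2 * ‖Y‖ ^ 2 - ⟪X, Y⟫ ^ 2) ≤ R X Y X Y ∧
        R X Y X Y ≤ -β * (‖X‖ ^ 2 * ‖Y‖ ^ 2 - ⟪X, Y⟫ ^ 2)) →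
      ∀ φ : E →ₗ[ℝ] E →ₗ[ℝ] ℝ, (∀ X Y : E, φ X Y = φ Y X) →
        (∑ i, φ (e i) (e i)) = 0 →
        (∑ i, ∑ j, ∑ k, ∑ l, R (e i) (e k) (e l) (e j) * φ (e k) (e l) * φ (e i) (e j)) ≤ 0) := by
  have hn2 : (2 : ℝ) ≤ (n : ℝ) := by exact_mod_cast hn
  have hn1 : (0 : ℝ) < (n : ℝ) - 1 := by linarith
  have hd0 : 0 < β / ((n : ℝ) - 1) := div_pos hβ hn1
  constructor
  · -- strict case
    intro hyp φ hsym htr hφ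
    have hb : ∀ X Y : E, ‖X‖ = 1 → ‖Y‖ = 1 → ⟪X, Y⟫ = 0 →
        -((n : ℝ) / ((n : ℝ) - 1)) * β ≤ R X Y X Y ∧ R X Y X Y ≤ -β := by
      intro X Y hX hY hXY
      have hli : LinearIndependent ℝ ![X, Y] := unit_orth_li X Y hX hY hXY
      obtain ⟨h1, h2⟩ := hyp X Y hli
      have hG : ‖X‖ ^ 2 * ‖Y‖ ^ 2 - ⟪X, Y⟫ ^ 2 = 1 := by
        rw [hX, hY, hXY]
        norm_num
      rw [hG, mul_one] at h1 h2
      exact ⟨le_of_lt h1, h2⟩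
    obtain ⟨t, ht0, htpos, hle⟩ := master hn e R hR1 hR2 hβ φ hsym htr hb
    have ht : 0 < t := htpos hφ
    have : -(β / ((n : ℝ) - 1)) * t < 0 := by nlinarith
    exact lt_of_le_of_lt hle this
  · -- non-strict case
    intro hyp φ hsym htr
    have hb : ∀ X Y : E, ‖X‖ = 1 → ‖Y‖ = 1 → ⟪X, Y⟫ = 0 →
        -((n : ℝ) / ((n : ℝ) - 1)) * β ≤ R X Y X Y ∧ R X Y X Y ≤ -β := by
      intro X Y hX hY hXY
      obtain ⟨h1, h2⟩ := hyp X Y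
      have hG : ‖X‖ ^ 2 * ‖Y‖ ^ 2 - ⟪X, Y⟫ ^ 2 = 1 := by
        rw [hX, hY, hXY]
        norm_num
      rw [hG, mul_one] at h1 h2
      exact ⟨h1, h2⟩
    obtain ⟨t, ht0, _, hle⟩ := master hn e R hR1 hR2 hβ φ hsym htr hb
    have : -(β / ((n : ℝ) - 1)) * t ≤ 0 := by nlinarith
    exact hle.trans this
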